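/- Let f and g be finite Blaschke products of degrees m and n respectively with no common zeros, and let φ = f/g. For any constant c with |c| < 1, the number of solutions in the open unit disk of φ(z) = c, counted with multiplicity, equals m; for |c| > 1, it equals n. -/

import Mathlib

open Polynomial

open Filter Topology

/-- The polynomial whose roots in the disk are the solutions of f/g = c, where
f = cf·∏(z-aₖ)/(1-conj(aₖ)z) and g = cg·∏(z-bₗ)/(1-conj(bₗ)z) are finite Blaschke
products: clearing denominators, f(z) = c·g(z) iff this polynomial vanishes. -/
noncomputable def levelPoly {m n : ℕ} (cf cg c : ℂ) (a : Fin m → ℂ) (b : Fin n → ℂ) :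
    Polynomial ℂ :=
  C cf * ((∏ k, (X - C (a k))) * ∏ l, (1 - C (starRingEnd ℂ (b l)) * X)) -
    C (c * cg) * ((∏ l, (X - C (b l))) * ∏ k, (1 - C (starRingEnd ℂ (a k)) * X))

noncomputable def synDiv (e : ℕ) (p : Polynomial ℂ) (r : ℂ) : Polynomial ℂ :=
  ∑ i ∈ Finset.range (e+1),
    C (∑ k ∈ Finset.Ico (i+1) (e+2), p.coeff k * r^(k-1-i)) * X^i

lemma synDiv_coeff (e : ℕ) (p : Polynomial ℂ) (r : ℂ) (i : ℕ) :
    (synDiv e p r).coeff i =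
      if i < e+1 then ∑ k ∈ Finset.Ico (i+1) (e+2), p.coeff k * r^(k-1-i) else 0 := by
  rw [synDiv, finset_sum_coeff]
  simp only [coeff_C_mul, coeff_X_pow, mul_ite, mul_one, mul_zero]
  rw [Finset.sum_ite_eq (Finset.range (e+1))]
  simp [Finset.mem_range]

lemma synDiv_natDegree_le (e : ℕ) (p : Polynomial ℂ) (r : ℂ) :
    (synDiv e p r).natDegree ≤ e := by
  refine natDegree_le_iff_coeff_eq_zero.2 fun N hN => ?_
  rw [synDiv_coeff, if_neg (by omega)]

lemma synDiv_spec (e : ℕ) (p : Polynomial ℂ) (r : ℂ) (hdeg : p.natDegree ≤ e+1)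
    (hr : p.eval r = 0) : (X - C r) * synDiv e p r = p := by
  ext k
  rw [sub_mul, coeff_sub, coeff_C_mul]
  match k with
  | 0 =>
    rw [coeff_X_mul_zero, synDiv_coeff, if_pos (by omega)]
    have hev := eval_eq_sum_range' (p := p) (n := e + 2) (by omega) r
    rw [Finset.range_eq_Ico, Finset.sum_eq_sum_Ico_succ_bot (by omega)] at hev
    have hsum : r * ∑ k ∈ Finset.Ico (0+1) (e+2), p.coeff k * r ^ (k-1-0)
        = ∑ i ∈ Finset.Ico 1 (e+2), p.coeff i * r ^ i := by
      rw [Finset.mul_sum]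
      refine Finset.sum_congr rfl fun k hk => ?_
      have hk1 : 1 ≤ k := (Finset.mem_Ico.1 hk).1
      rw [mul_left_comm, ← pow_succ']
      congr 2
      omega
    rw [zero_sub, neg_eq_iff_eq_neg, hsum]
    rw [hr] at hev
    simp only [pow_zero, mul_one, zero_add] at hev
    linear_combination -hev
  | Nat.succ j =>
    rw [coeff_X_mul, synDiv_coeff, synDiv_coeff]
    by_cases hj : j + 1 < e + 1
    · rw [if_pos (by omega), if_pos hj]
      rw [Finset.sum_eq_sum_Ico_succ_bot (a := j+1) (by omega)]
      have hsum : r * ∑ k ∈ Finset.Ico (j+1+1) (e+2), p.coeff k * r ^ (k-1-(j+1))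
          = ∑ k ∈ Finset.Ico (j+2) (e+2), p.coeff k * r ^ (k-1-j) := by
        rw [Finset.mul_sum]
        refine Finset.sum_congr rfl fun k hk => ?_
        have hk1 : j+2 ≤ k := (Finset.mem_Ico.1 hk).1
        rw [mul_left_comm, ← pow_succ']
        congr 2
        omega
      rw [hsum]
      simp
    · by_cases hje : j + 1 = e + 1
      · rw [if_pos (by omega), if_neg (by omega)]
        have hj' : j = e := by omega
        subst hj'
        have hico : Finset.Ico (j+1) (j+2) = {j+1} := by
          ext x; simp [Finset.mem_Ico]
        rw [hico, Finset.sum_singleton]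
        simp
      · rw [if_neg (by omega), if_neg (by omega)]
        rw [coeff_eq_zero_of_natDegree_lt (by omega)]
        ring


noncomputable def Complex.abs : AbsoluteValue ℂ ℝ := NormedField.toAbsoluteValue ℂ

lemma Complex.norm_eq_abs (z : ℂ) : ‖z‖ = Complex.abs z := rfl

lemma Complex.abs_conj (z : ℂ) : Complex.abs ((starRingEnd ℂ) z) = Complex.abs z := by
  rw [← Complex.norm_eq_abs, ← Complex.norm_eq_abs, Complex.norm_conj]

lemma Complex.continuous_abs : Continuous Complex.abs := continuous_norm

lemma Complex.normSq_eq_abs (z : ℂ) : Complex.normSq z = Complex.abs z ^ 2 :=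
  Complex.normSq_eq_norm_sq z

noncomputable def inCount (p : Polynomial ℂ) : ℕ :=
  Multiset.card (p.roots.filter fun z => Complex.abs z < 1)

lemma tendsto_eval_aux {d : ℕ} (P : ℕ → Polynomial ℂ) (q : Polynomial ℂ)
    (hP : ∀ j, (P j).natDegree ≤ d) (hq : q.natDegree ≤ d)
    (hco : ∀ i, Filter.Tendsto (fun j => (P j).coeff i) atTop (𝓝 (q.coeff i)))
    {r : ℕ → ℂ} {r₀ : ℂ} (hr : Filter.Tendsto r atTop (𝓝 r₀)) :
    Filter.Tendsto (fun j => (P j).eval (r j)) atTop (𝓝 (q.eval r₀)) := by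
  have h1 : ∀ j, (P j).eval (r j) = ∑ i ∈ Finset.range (d+1), (P j).coeff i * (r j)^i :=
    fun j => eval_eq_sum_range' (by have := hP j; omega) _
  have h2 : q.eval r₀ = ∑ i ∈ Finset.range (d+1), q.coeff i * r₀^i :=
    eval_eq_sum_range' (by omega) _
  rw [funext h1, h2]
  exact tendsto_finset_sum _ fun i _ => (hco i).mul (hr.pow i)

lemma root_bound {d : ℕ} {p : Polynomial ℂ} (hd : p.natDegree = d+1) {M ε : ℝ}
    (hε : 0 < ε) (hlead : ε ≤ Complex.abs (p.coeff (d+1)))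
    (hM : ∀ i, Complex.abs (p.coeff i) ≤ M) {r : ℂ} (hr : p.eval r = 0) :
    Complex.abs r ≤ max 1 ((d+1)*M/ε) := by
  by_contra hcon
  push_neg at hcon
  obtain ⟨h1, h2⟩ := max_lt_iff.1 hcon
  have hev := eval_eq_sum_range' (p := p) (n := d+2) (by omega) r
  rw [hr, Finset.sum_range_succ] at hev
  have habs1 : (1:ℝ) ≤ Complex.abs r := h1.le
  have hRd : (0:ℝ) < (Complex.abs r)^d := pow_pos (by linarith) d
  have key : Complex.abs (p.coeff (d+1) * r^(d+1)) ≤ (d+1) * (M * (Complex.abs r)^d) := by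
    have heq : p.coeff (d+1) * r^(d+1) = ∑ i ∈ Finset.range (d+1), -(p.coeff i * r^i) := by
      rw [Finset.sum_neg_distrib]
      linear_combination -hev
    rw [heq]
    calc Complex.abs (∑ i ∈ Finset.range (d+1), -(p.coeff i * r^i))
        ≤ ∑ i ∈ Finset.range (d+1), Complex.abs (-(p.coeff i * r^i)) :=
          Complex.abs.sum_le _ _
      _ ≤ ∑ _i ∈ Finset.range (d+1), M * (Complex.abs r)^d := by
          refine Finset.sum_le_sum fun i hi => ?_
          rw [map_neg_eq_map, map_mul, map_pow]
          have hi' : i ≤ d := by simpa [Nat.lt_succ_iff] using Finset.mem_range.1 hi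
          have : (Complex.abs r)^i ≤ (Complex.abs r)^d := pow_le_pow_right₀ habs1 hi'
          have h0 : (0:ℝ) ≤ Complex.abs (p.coeff i) := Complex.abs.nonneg _
          nlinarith [hM i, Complex.abs.nonneg r]
      _ = (d+1) * (M * (Complex.abs r)^d) := by
          rw [Finset.sum_const, Finset.card_range]; push_cast; ring
  have key2 : ε * ((Complex.abs r)^d * Complex.abs r)
      ≤ Complex.abs (p.coeff (d+1) * r^(d+1)) := by
    rw [map_mul, map_pow, pow_succ]
    exact mul_le_mul_of_nonneg_right hlead (by positivity)
  have hfin : ε * Complex.abs r ≤ (d+1) * M := by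
    have := key2.trans key
    rw [div_lt_iff₀ hε] at h2
    nlinarith
  rw [div_lt_iff₀ hε] at h2
  nlinarith

lemma pos_lemma : ∀ d : ℕ, ∀ P : ℕ → Polynomial ℂ, ∀ q : Polynomial ℂ,
    (∀ j, (P j).natDegree ≤ d) → q.natDegree = d → q ≠ 0 →
    (∀ i, Filter.Tendsto (fun j => (P j).coeff i) atTop (𝓝 (q.coeff i))) →
    (∀ z ∈ q.roots, Complex.abs z ≠ 1) →
    ∃ φ : ℕ → ℕ, StrictMono φ ∧ ∀ᶠ j in atTop, inCount (P (φ j)) = inCount q := by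
  intro d
  induction d with
  | zero =>
    intro P q hP hq hq0 hco hcirc
    refine ⟨id, strictMono_id, Filter.Eventually.of_forall fun j => ?_⟩
    have h1 : (P j).roots = 0 := by
      have := (card_roots' (P j)).trans (hP j)
      exact Multiset.card_eq_zero.1 (Nat.le_zero.1 this)
    have h2 : q.roots = 0 := by
      have := (card_roots' q).trans hq.le
      exact Multiset.card_eq_zero.1 (Nat.le_zero.1 this)
    simp only [inCount, id_eq, h1, h2]
  | succ e IH =>
    intro P q hP hq hq0 hco hcirc
    have hLq : q.coeff (e+1) ≠ 0 := by
      have h := leadingCoeff_ne_zero.2 hq0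
      rwa [leadingCoeff, hq] at h
    set ε := Complex.abs (q.coeff (e+1)) / 2 with hεdef
    have hεpos : 0 < ε := by
      have := Complex.abs.pos hLq; positivity
    have h2 : ∀ᶠ j in atTop, ε ≤ Complex.abs ((P j).coeff (e+1)) := by
      have ht : Filter.Tendsto (fun j => Complex.abs ((P j).coeff (e+1))) atTop
          (𝓝 (Complex.abs (q.coeff (e+1)))) :=
        (Complex.continuous_abs.continuousAt.tendsto).comp (hco (e+1))
      exact ht.eventually (eventually_ge_nhds (by
        have := Complex.abs.pos hLq; rw [hεdef]; linarith))
    obtain ⟨J₀, hJ₀⟩ := Filter.eventually_atTop.1 h2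
    set P₁ : ℕ → Polynomial ℂ := fun j => P (j + J₀) with hP₁def
    have hshift : Filter.Tendsto (fun j : ℕ => j + J₀) atTop atTop := tendsto_add_atTop_nat J₀
    have hco₁ : ∀ i, Filter.Tendsto (fun j => (P₁ j).coeff i) atTop (𝓝 (q.coeff i)) :=
      fun i => (hco i).comp hshift
    have hlead₁ : ∀ j, ε ≤ Complex.abs ((P₁ j).coeff (e+1)) := fun j => hJ₀ _ (Nat.le_add_left _ _)
    have hP₁ne : ∀ j, (P₁ j).coeff (e+1) ≠ 0 := by
      intro j h
      have := hlead₁ j; rw [h] at this; simp at this; linarith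
    have hdeg₁ : ∀ j, (P₁ j).natDegree = e+1 :=
      fun j => le_antisymm (hP _) (le_natDegree_of_ne_zero (hP₁ne j))
    have hne₁ : ∀ j, P₁ j ≠ 0 := fun j h => hP₁ne j (by rw [h]; simp)
    -- uniform coefficient bound
    have hbdd : ∀ i : ℕ, ∃ Mi : ℝ, ∀ j, Complex.abs ((P₁ j).coeff i) ≤ Mi := by
      intro i
      have ht : Filter.Tendsto (fun j => Complex.abs ((P₁ j).coeff i)) atTop
          (𝓝 (Complex.abs (q.coeff i))) :=
        (Complex.continuous_abs.continuousAt.tendsto).comp (hco₁ i)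
      obtain ⟨Mi, hMi⟩ := ht.bddAbove_range
      exact ⟨Mi, fun j => hMi (Set.mem_range_self j)⟩
    choose Ms hMs using hbdd
    set M : ℝ := ∑ i ∈ Finset.range (e+2), max (Ms i) 0 with hMdef
    have hM0 : 0 ≤ M := Finset.sum_nonneg fun i _ => le_max_right _ 0
    have hMb : ∀ j i, Complex.abs ((P₁ j).coeff i) ≤ M := by
      intro j i
      by_cases hi : i ≤ e+1
      · calc Complex.abs ((P₁ j).coeff i) ≤ Ms i := hMs i j
          _ ≤ max (Ms i) 0 := le_max_left _ _
          _ ≤ M := Finset.single_le_sum (f := fun i => max (Ms i) 0)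
              (fun i _ => le_max_right _ 0) (Finset.mem_range.2 (by omega))
      · rw [coeff_eq_zero_of_natDegree_lt (by rw [hdeg₁]; omega)]
        simpa using hM0
    set R : ℝ := max 1 (((e:ℝ)+1)*M/ε) with hRdef
    have hroot : ∀ j, ∃ z, (P₁ j).IsRoot z := by
      intro j
      refine IsAlgClosed.exists_root _ ?_
      rw [degree_eq_natDegree (hne₁ j), hdeg₁]
      exact_mod_cast Nat.succ_ne_zero e
    choose r hr using hroot
    have hrb : ∀ j, r j ∈ Metric.closedBall (0:ℂ) R := by
      intro j
      rw [Metric.mem_closedBall, dist_zero_right, Complex.norm_eq_abs]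
      exact root_bound (hdeg₁ j) hεpos (hlead₁ j) (fun i => hMb j i) (hr j)
    obtain ⟨zs, _, φ₁, hφ₁, hrφ⟩ :=
      tendsto_subseq_of_bounded (Metric.isBounded_closedBall) hrb
    have hqz : q.eval zs = 0 := by
      have h1 : Filter.Tendsto (fun j => (P₁ (φ₁ j)).eval (r (φ₁ j))) atTop (𝓝 (q.eval zs)) :=
        tendsto_eval_aux (d := e+1) _ q (fun j => (hdeg₁ _).le) hq.le
          (fun i => (hco₁ i).comp hφ₁.tendsto_atTop) hrφ
      have h2 : (fun j => (P₁ (φ₁ j)).eval (r (φ₁ j))) = fun _ => (0:ℂ) :=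
        funext fun j => hr _
      rw [h2] at h1
      exact tendsto_nhds_unique h1 tendsto_const_nhds
    have hz1 : Complex.abs zs ≠ 1 := hcirc zs (by rw [mem_roots hq0]; exact hqz)
    have hqfac : (X - C zs) * synDiv e q zs = q := synDiv_spec e q zs (by omega) hqz
    set q' := synDiv e q zs with hq'def
    have hq'0 : q' ≠ 0 := by
      intro h; rw [h, mul_zero] at hqfac; exact hq0 hqfac.symm
    have hq'deg : q'.natDegree = e := by
      have h := natDegree_mul (X_sub_C_ne_zero zs) hq'0
      rw [hqfac, hq, natDegree_X_sub_C] at h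
      omega
    set P₂ : ℕ → Polynomial ℂ := fun j => P₁ (φ₁ j) with hP₂def
    set r₂ : ℕ → ℂ := fun j => r (φ₁ j) with hr₂def
    set s : ℕ → Polynomial ℂ := fun j => synDiv e (P₂ j) (r₂ j) with hsdef
    have hsfac : ∀ j, (X - C (r₂ j)) * s j = P₂ j :=
      fun j => synDiv_spec _ _ _ (by rw [hdeg₁]) (hr _)
    have hco₂ : ∀ i, Filter.Tendsto (fun j => (s j).coeff i) atTop (𝓝 (q'.coeff i)) := by
      intro i
      by_cases hi : i < e + 1
      · have h1 : ∀ j, (s j).coeff i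
            = ∑ k ∈ Finset.Ico (i+1) (e+2), (P₂ j).coeff k * (r₂ j)^(k-1-i) :=
          fun j => by rw [hsdef, synDiv_coeff, if_pos hi]
        have h2 : q'.coeff i = ∑ k ∈ Finset.Ico (i+1) (e+2), q.coeff k * zs^(k-1-i) := by
          rw [hq'def, synDiv_coeff, if_pos hi]
        rw [funext h1, h2]
        exact tendsto_finset_sum _ fun k _ =>
          ((hco₁ k).comp hφ₁.tendsto_atTop).mul (hrφ.pow _)
      · have h1 : ∀ j, (s j).coeff i = 0 := fun j => by rw [hsdef, synDiv_coeff, if_neg hi]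
        have h2 : q'.coeff i = 0 := by rw [hq'def, synDiv_coeff, if_neg hi]
        rw [funext h1, h2]
        exact tendsto_const_nhds
    have hcirc' : ∀ z ∈ q'.roots, Complex.abs z ≠ 1 := by
      intro z hz
      refine hcirc z ?_
      rw [← hqfac, roots_mul (by rw [hqfac]; exact hq0)]
      exact Multiset.mem_add.2 (Or.inr hz)
    obtain ⟨φ₂, hφ₂, hev₂⟩ := IH s q' (fun j => synDiv_natDegree_le _ _ _) hq'deg hq'0 hco₂ hcirc'
    have hrφ₂ : Filter.Tendsto (fun j => r₂ (φ₂ j)) atTop (𝓝 zs) := hrφ.comp hφ₂.tendsto_atTop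
    have habsφ₂ : Filter.Tendsto (fun j => Complex.abs (r₂ (φ₂ j))) atTop (𝓝 (Complex.abs zs)) :=
      (Complex.continuous_abs.continuousAt.tendsto).comp hrφ₂
    have hind : ∀ᶠ j in atTop, (Complex.abs (r₂ (φ₂ j)) < 1 ↔ Complex.abs zs < 1) := by
      rcases lt_or_gt_of_ne hz1 with h | h
      · filter_upwards [habsφ₂.eventually (eventually_lt_nhds h)] with j hj
        simp [hj, h]
      · filter_upwards [habsφ₂.eventually (eventually_gt_nhds h)] with j hj
        constructor
        · intro h'; linarith
        · intro h'; linarith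
    refine ⟨fun j => φ₁ (φ₂ j) + J₀, (hφ₁.comp hφ₂).add_const J₀, ?_⟩
    filter_upwards [hev₂, hind] with j h1 h2
    have hPid : P (φ₁ (φ₂ j) + J₀) = P₂ (φ₂ j) := rfl
    rw [hPid]
    have hP2ne : P₂ (φ₂ j) ≠ 0 := hne₁ _
    have hcount : ∀ (u : ℂ) (v : Polynomial ℂ), (X - C u) * v ≠ 0 →
        inCount ((X - C u) * v) = (if Complex.abs u < 1 then 1 else 0) + inCount v := by
      intro u v huv
      rw [inCount, roots_mul huv, roots_X_sub_C, Multiset.filter_add, Multiset.card_add, inCount]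
      congr 1
      rw [Multiset.filter_singleton]
      split_ifs <;> simp
    have hA : inCount (P₂ (φ₂ j)) = (if Complex.abs (r₂ (φ₂ j)) < 1 then 1 else 0)
        + inCount (s (φ₂ j)) := by
      rw [← hsfac (φ₂ j)]
      exact hcount _ _ (by rw [hsfac]; exact hP2ne)
    have hB : inCount q = (if Complex.abs zs < 1 then 1 else 0) + inCount q' := by
      rw [← hqfac]
      exact hcount _ _ (by rw [hqfac]; exact hq0)
    rw [hA, h1, hB, if_congr h2 rfl rfl]

lemma rootcount_seq (d : ℕ) (P : ℕ → Polynomial ℂ) (q : Polynomial ℂ)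
    (hP : ∀ j, (P j).natDegree ≤ d) (hq : q.natDegree = d) (hq0 : q ≠ 0)
    (hco : ∀ i, Filter.Tendsto (fun j => (P j).coeff i) atTop (𝓝 (q.coeff i)))
    (hcirc : ∀ z ∈ q.roots, Complex.abs z ≠ 1) :
    ∀ᶠ j in atTop, inCount (P j) = inCount q := by
  by_contra h
  rw [Filter.not_eventually] at h
  obtain ⟨φ₀, hφ₀, hne⟩ := Filter.extraction_of_frequently_atTop h
  obtain ⟨φ, hφ, hev⟩ := pos_lemma d (P ∘ φ₀) q (fun j => hP _) hq hq0
    (fun i => (hco i).comp hφ₀.tendsto_atTop) hcirc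
  obtain ⟨j, hj⟩ := hev.exists
  exact hne (φ j) hj

lemma rootcount_nhds {d : ℕ} (F : ℂ → Polynomial ℂ) (t₀ : ℂ)
    (hdeg : ∀ t, (F t).natDegree ≤ d) (hd0 : (F t₀).natDegree = d) (h0 : F t₀ ≠ 0)
    (hcont : ∀ i, ContinuousAt (fun t => (F t).coeff i) t₀)
    (hcirc : ∀ z ∈ (F t₀).roots, Complex.abs z ≠ 1) :
    ∀ᶠ t in 𝓝 t₀, inCount (F t) = inCount (F t₀) := by
  by_contra h
  rw [Filter.not_eventually] at h
  obtain ⟨u, hu, hup⟩ := exists_seq_forall_of_frequently h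
  have := rootcount_seq d (F ∘ u) (F t₀) (fun j => hdeg _) hd0 h0
    (fun i => ((hcont i).tendsto).comp hu) hcirc
  obtain ⟨j, hj⟩ := this.exists
  exact hup j hj


lemma ndeg_one_sub_le (a : ℂ) : (1 - C a * X).natDegree ≤ 1 := by
  refine (natDegree_sub_le _ _).trans (max_le ?_ ?_)
  · simp
  · exact (natDegree_C_mul_le a X).trans (le_of_eq natDegree_X)

lemma reflect_one_X_sub_C (a : ℂ) : reflect 1 (X - C a) = 1 - C a * X := by
  rw [sub_eq_add_neg, ← C_neg, reflect_add, reflect_C]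
  nth_rewrite 1 [← pow_one (X : Polynomial ℂ)]
  rw [reflect_monomial]
  simp [revAt_le]
  ring

lemma reflect_one_one_sub (a : ℂ) : reflect 1 (1 - C a * X) = X - C a := by
  rw [sub_eq_add_neg, reflect_add]
  rw [show (1 : Polynomial ℂ) = C 1 from (map_one C).symm, reflect_C]
  rw [show -(C a * X) = C (-a) * X ^ 1 by push_cast [C_neg]; ring]
  rw [reflect_C_mul_X_pow]
  simp [revAt_le]
  ring

lemma ndeg_prod_le_card {ι : Type*} (s : Finset ι) (f : ι → Polynomial ℂ)
    (h : ∀ k ∈ s, (f k).natDegree ≤ 1) : (∏ k ∈ s, f k).natDegree ≤ s.card := by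
  refine (natDegree_prod_le s f).trans ?_
  calc ∑ k ∈ s, (f k).natDegree ≤ ∑ _k ∈ s, 1 := Finset.sum_le_sum h
    _ = s.card := by simp

lemma reflect_prod_X_sub_C {ι : Type*} (s : Finset ι) (f : ι → ℂ) :
    reflect s.card (∏ k ∈ s, (X - C (f k))) = ∏ k ∈ s, (1 - C (f k) * X) := by
  induction s using Finset.cons_induction_on with
  | empty => simp [reflect_one]
  | cons a s ha ih =>
    rw [Finset.prod_cons, Finset.prod_cons, Finset.card_cons,
      add_comm (s.card) 1, reflect_mul _ _ (natDegree_X_sub_C_le _)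
        (ndeg_prod_le_card s _ fun k _ => natDegree_X_sub_C_le _), ih, reflect_one_X_sub_C]

lemma reflect_prod_one_sub {ι : Type*} (s : Finset ι) (f : ι → ℂ) :
    reflect s.card (∏ k ∈ s, (1 - C (f k) * X)) = ∏ k ∈ s, (X - C (f k)) := by
  induction s using Finset.cons_induction_on with
  | empty => simp [reflect_one]
  | cons a s ha ih =>
    rw [Finset.prod_cons, Finset.prod_cons, Finset.card_cons,
      add_comm (s.card) 1, reflect_mul _ _ (ndeg_one_sub_le _)
        (ndeg_prod_le_card s _ fun k _ => ndeg_one_sub_le _), ih, reflect_one_one_sub]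

lemma reflect_multiset_prod_X_sub_C (S : Multiset ℂ) :
    reflect (Multiset.card S) ((S.map fun r => X - C r).prod)
      = (S.map fun r => 1 - C r * X).prod := by
  induction S using Multiset.induction_on with
  | empty => simp [reflect_one]
  | cons a S ih =>
    have hle : ((S.map fun r => X - C r).prod).natDegree ≤ Multiset.card S :=
      le_of_eq (natDegree_multiset_prod_X_sub_C_eq_card S)
    rw [Multiset.map_cons, Multiset.map_cons, Multiset.prod_cons, Multiset.prod_cons,
      Multiset.card_cons, add_comm (Multiset.card S) 1,
      reflect_mul _ _ (natDegree_X_sub_C_le _) hle, ih, reflect_one_X_sub_C]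

noncomputable def conjReflect (N : ℕ) (p : Polynomial ℂ) : Polynomial ℂ :=
  (reflect N p).map (starRingEnd ℂ)

lemma one_sub_C_mul_X_ne_zero (c : ℂ) : (1 - C c * X : Polynomial ℂ) ≠ 0 := by
  intro h
  have := congrArg (eval 0) h
  simp at this

lemma roots_one_sub_C_mul_X (c : ℂ) (hc : c ≠ 0) :
    (1 - C c * X : Polynomial ℂ).roots = {c⁻¹} := by
  have h : (1 - C c * X : Polynomial ℂ) = C (-c) * (X - C c⁻¹) := by
    rw [mul_sub, ← C_mul, neg_mul, mul_inv_cancel₀ hc, C_neg, C_neg, C_1]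
    ring
  rw [h, roots_C_mul _ (neg_ne_zero.2 hc), roots_X_sub_C]

lemma bind_ite_roots (g : ℂ → ℂ) (S : Multiset ℂ) :
    (S.bind fun r => if r = 0 then 0 else {g r}) = (S.filter (· ≠ 0)).map g := by
  induction S using Multiset.induction_on with
  | empty => simp
  | cons a S ih =>
    rw [Multiset.cons_bind, ih, Multiset.filter_cons]
    by_cases ha : a = 0 <;> simp [ha]

lemma inCount_add_conjReflect {N : ℕ} {p : Polynomial ℂ} (hp : p ≠ 0)
    (hdeg : p.natDegree ≤ N) (hcirc : ∀ z ∈ p.roots, Complex.abs z ≠ 1) :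
    inCount p + inCount (conjReflect N p) = N := by
  have hsplit : Splits p := IsAlgClosed.splits p
  have hfac := (C_leadingCoeff_mul_prod_multiset_X_sub_C (splits_iff_card_roots.1 hsplit)).symm
  have hcard : Multiset.card p.roots = p.natDegree := splits_iff_card_roots.1 hsplit
  set t := N - p.natDegree with ht
  have hL : p.leadingCoeff ≠ 0 := leadingCoeff_ne_zero.2 hp
  have h1 : reflect N p
      = C p.leadingCoeff * (X ^ t * (p.roots.map fun r => 1 - C r * X).prod) := by
    conv_lhs => rw [hfac]
    rw [reflect_C_mul]
    have hN : N = t + Multiset.card p.roots := by rw [hcard]; omega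
    rw [hN]
    have h2 := reflect_mul (1 : Polynomial ℂ) ((p.roots.map fun a => X - C a).prod)
      (F := t) (G := Multiset.card p.roots) (by simp)
      (le_of_eq (natDegree_multiset_prod_X_sub_C_eq_card _))
    rw [one_mul] at h2
    rw [h2, reflect_multiset_prod_X_sub_C, reflect_one]
  have h2 : conjReflect N p = C (starRingEnd ℂ p.leadingCoeff)
      * (X ^ t * (p.roots.map fun r => 1 - C (starRingEnd ℂ r) * X).prod) := by
    rw [conjReflect, h1, Polynomial.map_mul, Polynomial.map_mul, Polynomial.map_pow, map_X,
      map_C, Polynomial.map_multiset_prod, Multiset.map_map]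
    have hmc : (Polynomial.map (starRingEnd ℂ) ∘ fun r => 1 - C r * X)
        = fun r : ℂ => 1 - C ((starRingEnd ℂ) r) * X := by
      funext r
      simp [Polynomial.map_sub, Polynomial.map_mul]
    rw [hmc]
  have hcL : (starRingEnd ℂ) p.leadingCoeff ≠ 0 := by
    simpa using hL
  have hprodne : ((p.roots.map fun r => 1 - C (starRingEnd ℂ r) * X).prod) ≠ 0 := by
    refine Multiset.prod_ne_zero ?_
    intro h0
    obtain ⟨r, _, hr⟩ := Multiset.mem_map.1 h0
    exact one_sub_C_mul_X_ne_zero _ hr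
  have hroots2 : (conjReflect N p).roots
      = t • ({0} : Multiset ℂ)
        + (p.roots.filter (· ≠ 0)).map fun r => ((starRingEnd ℂ) r)⁻¹ := by
    rw [h2, roots_C_mul _ hcL,
      roots_mul (mul_ne_zero (pow_ne_zero t X_ne_zero) hprodne), roots_pow, roots_X,
      roots_multiset_prod _ (by
        intro h0
        obtain ⟨r, _, hr⟩ := Multiset.mem_map.1 h0
        exact one_sub_C_mul_X_ne_zero _ hr)]
    congr 1
    rw [Multiset.bind_map]
    have : ∀ r ∈ p.roots, (1 - C ((starRingEnd ℂ) r) * X : Polynomial ℂ).roots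
        = if r = 0 then 0 else {((starRingEnd ℂ) r)⁻¹} := by
      intro r _
      by_cases hr : r = 0
      · simp [hr]
      · rw [roots_one_sub_C_mul_X _ (by simpa using hr), if_neg hr]
    rw [Multiset.bind_congr this, bind_ite_roots]
  -- counting
  have hiC : inCount (conjReflect N p)
      = t + Multiset.card ((p.roots.filter (· ≠ 0)).filter fun r => 1 < Complex.abs r) := by
    rw [inCount, hroots2, Multiset.filter_add, Multiset.card_add]
    congr 1
    · rw [Multiset.nsmul_singleton, Multiset.filter_eq_self.2, Multiset.card_replicate]
      intro z hz
      rw [Multiset.eq_of_mem_replicate hz]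
      simp
    · rw [Multiset.filter_map, Multiset.card_map]
      congr 1
      apply Multiset.filter_congr
      intro r hr
      have hr0 : r ≠ 0 := (Multiset.mem_filter.1 hr).2
      have habs : Complex.abs (((starRingEnd ℂ) r)⁻¹) = (Complex.abs r)⁻¹ := by
        rw [map_inv₀, Complex.abs_conj]
      simp only [Function.comp_apply, habs]
      have hpos : 0 < Complex.abs r := by
        simpa [Complex.abs.pos_iff] using hr0
      exact inv_lt_one₀ hpos
  have hsplit2 : Multiset.card (p.roots.filter fun z => Complex.abs z < 1)
      + Multiset.card ((p.roots.filter (· ≠ 0)).filter fun r => 1 < Complex.abs r)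
      = Multiset.card p.roots := by
    have hf2 : (p.roots.filter (· ≠ 0)).filter (fun r => 1 < Complex.abs r)
        = p.roots.filter fun z => ¬ Complex.abs z < 1 := by
      rw [Multiset.filter_filter]
      apply Multiset.filter_congr
      intro z hz
      have h1 := hcirc z hz
      constructor
      · rintro ⟨h2, _⟩; linarith
      · intro h2
        have : 1 < Complex.abs z := lt_of_le_of_ne (not_lt.1 h2) (Ne.symm h1)
        exact ⟨this, by intro h0; rw [h0] at this; simp at this; linarith⟩
    rw [hf2, ← Multiset.card_add, Multiset.filter_add_not]
  rw [hiC]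
  have hic : inCount p = Multiset.card (p.roots.filter fun z => Complex.abs z < 1) := rfl
  rw [hic]
  omega

section LP
variable {m n : ℕ} (cf cg c : ℂ) (a : Fin m → ℂ) (b : Fin n → ℂ)

lemma ndegA : (∏ k, (X - C (a k))).natDegree ≤ m := by
  have h := ndeg_prod_le_card Finset.univ (fun k => X - C (a k))
    (fun k _ => natDegree_X_sub_C_le _)
  simpa using h

lemma ndegAs : (∏ k, (1 - C (starRingEnd ℂ (a k)) * X)).natDegree ≤ m := by
  have h := ndeg_prod_le_card Finset.univ (fun k => 1 - C (starRingEnd ℂ (a k)) * X)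
    (fun k _ => ndeg_one_sub_le _)
  simpa using h

lemma reflectA : reflect m (∏ k, (X - C (a k))) = ∏ k, (1 - C (a k) * X) := by
  have h := reflect_prod_X_sub_C (Finset.univ : Finset (Fin m)) a
  simpa using h

lemma reflectAs (f : Fin m → ℂ) :
    reflect m (∏ k, (1 - C (f k) * X)) = ∏ k, (X - C (f k)) := by
  have h := reflect_prod_one_sub (Finset.univ : Finset (Fin m)) f
  simpa using h

lemma reflect_sub' (N : ℕ) (f g : Polynomial ℂ) :
    reflect N (f - g) = reflect N f - reflect N g := by
  have h : f - g = f + C (-1) * g := by rw [C_neg, C_1]; ring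
  rw [h, reflect_add, reflect_C_mul, C_neg, C_1]
  ring

lemma natDegree_levelPoly_le : (levelPoly cf cg c a b).natDegree ≤ m + n := by
  rw [levelPoly]
  refine (natDegree_sub_le _ _).trans (max_le ?_ ?_)
  · refine natDegree_mul_le.trans ?_
    rw [natDegree_C]
    refine le_trans (by exact le_of_eq (zero_add _)) ?_
    refine natDegree_mul_le.trans ?_
    exact add_le_add (ndegA a) (ndegAs b)
  · refine natDegree_mul_le.trans ?_
    rw [natDegree_C]
    refine le_trans (by exact le_of_eq (zero_add _)) ?_
    refine natDegree_mul_le.trans ?_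
    have := add_le_add (ndegA b) (ndegAs a)
    omega

lemma reflect_levelPoly : reflect (m+n) (levelPoly cf cg c a b)
    = C cf * ((∏ k, (1 - C (a k) * X)) * ∏ l, (X - C (starRingEnd ℂ (b l)))) -
      C (c * cg) * ((∏ l, (1 - C (b l) * X)) * ∏ k, (X - C (starRingEnd ℂ (a k)))) := by
  rw [levelPoly, reflect_sub', reflect_C_mul, reflect_C_mul,
    reflect_mul _ _ (ndegA a) (ndegAs b), reflectA, reflectAs]
  rw [show m + n = n + m from add_comm m n,
    reflect_mul _ _ (ndegA b) (ndegAs a), reflectA, reflectAs]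

lemma conjReflect_levelPoly (hcf : Complex.abs cf = 1) (hcg : Complex.abs cg = 1) :
    conjReflect (m+n) (levelPoly cf cg c a b)
      = C ((starRingEnd ℂ) (cf*cg)) * levelPoly cg cf ((starRingEnd ℂ) c) b a := by
  have hcf1 : cf * (starRingEnd ℂ) cf = 1 := by
    rw [Complex.mul_conj, Complex.normSq_eq_abs, hcf]
    norm_num
  have hcg1 : cg * (starRingEnd ℂ) cg = 1 := by
    rw [Complex.mul_conj, Complex.normSq_eq_abs, hcg]
    norm_num
  rw [conjReflect, reflect_levelPoly, levelPoly]
  simp only [Polynomial.map_sub, Polynomial.map_mul, Polynomial.map_prod, Polynomial.map_one,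
    map_C, map_X, Complex.conj_conj, map_mul]
  have h1 : C cg * C ((starRingEnd ℂ) cg) = 1 := by rw [← C_mul, hcg1, C_1]
  have h2 : C cf * C ((starRingEnd ℂ) cf) = 1 := by rw [← C_mul, hcf1, C_1]
  linear_combination (-(C ((starRingEnd ℂ) cf) *
      ((∏ k, (1 - C ((starRingEnd ℂ) (a k)) * X)) * ∏ l, (X - C (b l))))) * h1
    + (C ((starRingEnd ℂ) c) * C ((starRingEnd ℂ) cg) *
      ((∏ l, (1 - C ((starRingEnd ℂ) (b l)) * X)) * ∏ k, (X - C (a k)))) * h2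

end LP

section LP2
variable {m n : ℕ}

lemma coeff_levelPoly_top (cf cg c : ℂ) (a : Fin m → ℂ) (b : Fin n → ℂ) :
    (levelPoly cf cg c a b).coeff (m+n)
      = cf * ∏ l, (-((starRingEnd ℂ) (b l))) - c * cg * ∏ k, (-((starRingEnd ℂ) (a k))) := by
  have h : (levelPoly cf cg c a b).coeff (m+n)
      = (reflect (m+n) (levelPoly cf cg c a b)).coeff 0 := by
    rw [coeff_reflect, revAt_le (Nat.zero_le _), Nat.sub_zero]
  rw [h, reflect_levelPoly, coeff_zero_eq_eval_zero]
  simp [eval_prod]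

lemma prod_one_sub_ne_zero (z : ℂ) (f : Fin m → ℂ) (hf : ∀ k, Complex.abs (f k) < 1)
    (hz : Complex.abs z ≤ 1) : (∏ k, (1 - (starRingEnd ℂ) (f k) * z)) ≠ 0 := by
  rw [Finset.prod_ne_zero_iff]
  intro k _ h
  have h1 : (starRingEnd ℂ) (f k) * z = 1 := by linear_combination -h
  have := congrArg Complex.abs h1
  rw [map_mul, Complex.abs_conj, map_one] at this
  nlinarith [hf k, Complex.abs.nonneg z, Complex.abs.nonneg (f k)]

lemma levelPoly_ne_zero {cf cg c : ℂ} (hcf : Complex.abs cf = 1) (hcg : Complex.abs cg = 1)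
    {a : Fin m → ℂ} {b : Fin n → ℂ}
    (ha : ∀ k, Complex.abs (a k) < 1) (hb : ∀ l, Complex.abs (b l) < 1)
    (hdisj : ∀ k l, a k ≠ b l) (hc : Complex.abs c ≠ 1) :
    levelPoly cf cg c a b ≠ 0 := by
  have hcf0 : cf ≠ 0 := fun h => by rw [h] at hcf; simp at hcf
  have hcg0 : cg ≠ 0 := fun h => by rw [h] at hcg; simp at hcg
  intro h0
  by_cases hn : n ≠ 0
  · -- evaluate at b l₀
    obtain ⟨l₀⟩ : Nonempty (Fin n) := ⟨⟨0, Nat.pos_of_ne_zero hn⟩⟩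
    have hev := congrArg (eval (b l₀)) h0
    rw [levelPoly] at hev
    simp only [eval_sub, eval_mul, eval_C, eval_prod, eval_one, eval_X, eval_zero] at hev
    rw [Finset.prod_eq_zero (f := fun l => b l₀ - b l) (Finset.mem_univ l₀) (sub_self _)] at hev
    have hA : (∏ k, (b l₀ - a k)) ≠ 0 :=
      Finset.prod_ne_zero_iff.2 fun k _ => sub_ne_zero.2 fun h => hdisj k l₀ h.symm
    have hBs : (∏ l, (1 - (starRingEnd ℂ) (b l) * b l₀)) ≠ 0 :=
      prod_one_sub_ne_zero _ b hb (hb l₀).le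
    rw [zero_mul, mul_zero, sub_zero] at hev
    exact (mul_ne_zero hcf0 (mul_ne_zero hA hBs)) hev
  · by_cases hm : m ≠ 0
    · obtain ⟨k₀⟩ : Nonempty (Fin m) := ⟨⟨0, Nat.pos_of_ne_zero hm⟩⟩
      have hev := congrArg (eval (a k₀)) h0
      rw [levelPoly] at hev
      simp only [eval_sub, eval_mul, eval_C, eval_prod, eval_one, eval_X, eval_zero] at hev
      rw [Finset.prod_eq_zero (f := fun k => a k₀ - a k) (Finset.mem_univ k₀) (sub_self _)] at hev
      have hB : (∏ l, (a k₀ - b l)) ≠ 0 :=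
        Finset.prod_ne_zero_iff.2 fun l _ => sub_ne_zero.2 (hdisj k₀ l)
      have hAs : (∏ k, (1 - (starRingEnd ℂ) (a k) * a k₀)) ≠ 0 :=
        prod_one_sub_ne_zero _ a ha (ha k₀).le
      rw [zero_mul, mul_zero, zero_sub, neg_eq_zero] at hev
      rcases mul_eq_zero.1 hev with h | h
      · rcases mul_eq_zero.1 h with h' | h'
        · -- c = 0 : contradiction with levelPoly = C cf * (A*Bs) ≠ 0
          have hc0 : c = 0 := h'
          rw [hc0, levelPoly, zero_mul, map_zero, zero_mul, sub_zero] at h0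
          have hAne : (∏ k, (X - C (a k)) : Polynomial ℂ) ≠ 0 :=
            (monic_prod_of_monic _ _ fun k _ => monic_X_sub_C (a k)).ne_zero
          have hBsne : (∏ l, (1 - C ((starRingEnd ℂ) (b l)) * X) : Polynomial ℂ) ≠ 0 :=
            Finset.prod_ne_zero_iff.2 fun l _ => one_sub_C_mul_X_ne_zero _
          exact (mul_ne_zero (fun hC => hcf0 (by
            have := congrArg (eval 0) hC; simpa using this))
            (mul_ne_zero hAne hBsne)) h0
        · exact hcg0 h'
      · rcases mul_eq_zero.1 h with h' | h'
        · exact hB h'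
        · exact hAs h'
    · -- m = n = 0
      have hm0 : m = 0 := by omega
      have hn0 : n = 0 := by omega
      subst hm0; subst hn0
      rw [levelPoly] at h0
      simp only [Finset.univ_eq_empty, Finset.prod_empty, mul_one, one_mul] at h0
      have : cf - c * cg = 0 := by
        have := congrArg (eval 0) h0
        simpa using this
      have h1 : cf = c * cg := by linear_combination this
      have := congrArg Complex.abs h1
      rw [hcf, map_mul, hcg, mul_one] at this
      exact hc this.symm

lemma levelPoly_circle {cf cg c : ℂ} (hcf : Complex.abs cf = 1) (hcg : Complex.abs cg = 1)
    {a : Fin m → ℂ} {b : Fin n → ℂ}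
    (ha : ∀ k, Complex.abs (a k) < 1) (hb : ∀ l, Complex.abs (b l) < 1)
    (hc : Complex.abs c ≠ 1) :
    ∀ z ∈ (levelPoly cf cg c a b).roots, Complex.abs z ≠ 1 := by
  intro z hz h1
  obtain ⟨hne, hroot⟩ := mem_roots'.1 hz
  rw [IsRoot, levelPoly] at hroot
  simp only [eval_sub, eval_mul, eval_C, eval_prod, eval_one, eval_X] at hroot
  have hzz : z * (starRingEnd ℂ) z = 1 := by
    rw [Complex.mul_conj, Complex.normSq_eq_abs, h1]
    norm_num
  have habs : ∀ w : ℂ, Complex.abs (1 - (starRingEnd ℂ) w * z) = Complex.abs (z - w) := by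
    intro w
    have h2 : 1 - (starRingEnd ℂ) w * z = z * ((starRingEnd ℂ) (z - w)) := by
      rw [map_sub, mul_sub, hzz]
      ring
    rw [h2, map_mul, h1, Complex.abs_conj, one_mul]
  have heq : cf * ((∏ k, (z - a k)) * ∏ l, (1 - (starRingEnd ℂ) (b l) * z))
      = c * cg * ((∏ l, (z - b l)) * ∏ k, (1 - (starRingEnd ℂ) (a k) * z)) := by
    linear_combination hroot
  have habseq := congrArg Complex.abs heq
  simp only [map_mul, map_prod] at habseq
  rw [hcf, hcg] at habseq
  have hPA : ∏ k, Complex.abs (1 - (starRingEnd ℂ) (a k) * z) = ∏ k, Complex.abs (z - a k) :=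
    Finset.prod_congr rfl fun k _ => habs (a k)
  have hPB : ∏ l, Complex.abs (1 - (starRingEnd ℂ) (b l) * z) = ∏ l, Complex.abs (z - b l) :=
    Finset.prod_congr rfl fun l _ => habs (b l)
  rw [hPA, hPB, one_mul, mul_one] at habseq
  -- habseq : ∏|z-a| * ∏|z-b| = |c| * (∏|z-b| * ∏|z-a|)
  have hA0 : (∏ k, Complex.abs (z - a k)) ≠ 0 := by
    rw [Finset.prod_ne_zero_iff]
    intro k _ h
    have : z = a k := by
      have := Complex.abs.eq_zero.1 h
      linear_combination this
    rw [this] at h1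
    exact absurd h1 (ne_of_lt (ha k))
  have hB0 : (∏ l, Complex.abs (z - b l)) ≠ 0 := by
    rw [Finset.prod_ne_zero_iff]
    intro l _ h
    have : z = b l := by
      have := Complex.abs.eq_zero.1 h
      linear_combination this
    rw [this] at h1
    exact absurd h1 (ne_of_lt (hb l))
  apply hc
  have h5 : (∏ k, Complex.abs (z - a k)) * (∏ l, Complex.abs (z - b l)) * 1
      = (∏ k, Complex.abs (z - a k)) * (∏ l, Complex.abs (z - b l)) * Complex.abs c := by
    nth_rewrite 1 [mul_one]
    nth_rewrite 1 [habseq]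
    ring
  have h6 := mul_left_cancel₀ (mul_ne_zero hA0 hB0) h5
  exact h6.symm

lemma levelPoly_coeff_continuous (cf cg : ℂ) (a : Fin m → ℂ) (b : Fin n → ℂ) (i : ℕ) :
    Continuous fun c => (levelPoly cf cg c a b).coeff i := by
  simp only [levelPoly, coeff_sub, coeff_C_mul]
  fun_prop

lemma inCount_levelPoly_zero {cf cg : ℂ} (hcf : Complex.abs cf = 1)
    {a : Fin m → ℂ} {b : Fin n → ℂ}
    (ha : ∀ k, Complex.abs (a k) < 1) (hb : ∀ l, Complex.abs (b l) < 1) :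
    inCount (levelPoly cf cg 0 a b) = m := by
  have hcf0 : cf ≠ 0 := fun h => by rw [h] at hcf; simp at hcf
  have h : levelPoly cf cg 0 a b
      = C cf * ((∏ k, (X - C (a k))) * ∏ l, (1 - C ((starRingEnd ℂ) (b l)) * X)) := by
    rw [levelPoly, zero_mul, map_zero, zero_mul, sub_zero]
  have hAne : (∏ k, (X - C (a k)) : Polynomial ℂ) ≠ 0 :=
    (monic_prod_of_monic _ _ fun k _ => monic_X_sub_C (a k)).ne_zero
  have hBsne : (∏ l, (1 - C ((starRingEnd ℂ) (b l)) * X) : Polynomial ℂ) ≠ 0 :=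
    Finset.prod_ne_zero_iff.2 fun l _ => one_sub_C_mul_X_ne_zero _
  rw [inCount, h, roots_C_mul _ hcf0, roots_mul (mul_ne_zero hAne hBsne),
    Multiset.filter_add, Multiset.card_add]
  have h1 : (∏ k, (X - C (a k)) : Polynomial ℂ).roots
      = Finset.univ.val.bind fun k => {a k} := by
    rw [roots_prod _ _ hAne]
    apply Multiset.bind_congr
    intro k _
    rw [roots_X_sub_C]
  have h2 : Multiset.filter (fun z => Complex.abs z < 1)
      (∏ k, (X - C (a k)) : Polynomial ℂ).roots
      = (∏ k, (X - C (a k)) : Polynomial ℂ).roots := by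
    rw [Multiset.filter_eq_self]
    intro z hz
    rw [h1] at hz
    obtain ⟨k, _, hk⟩ := Multiset.mem_bind.1 hz
    rw [Multiset.mem_singleton.1 hk]
    exact ha k
  have h3 : Multiset.filter (fun z => Complex.abs z < 1)
      (∏ l, (1 - C ((starRingEnd ℂ) (b l)) * X) : Polynomial ℂ).roots = 0 := by
    rw [Multiset.filter_eq_nil]
    intro z hz hlt
    obtain ⟨-, hroot⟩ := mem_roots'.1 hz
    rw [IsRoot, eval_prod] at hroot
    obtain ⟨l, -, hl⟩ := Finset.prod_eq_zero_iff.1 hroot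
    simp only [eval_sub, eval_mul, eval_one, eval_C, eval_X] at hl
    have h4 : (starRingEnd ℂ) (b l) * z = 1 := by linear_combination -hl
    have := congrArg Complex.abs h4
    rw [map_mul, Complex.abs_conj, map_one] at this
    nlinarith [hb l, Complex.abs.nonneg z, Complex.abs.nonneg (b l)]
  rw [h2, h3, h1]
  simp [Multiset.card_bind]

lemma levelPoly_top_nonvanish {cf cg c : ℂ} (hcf : Complex.abs cf = 1)
    (hcg : Complex.abs cg = 1)
    {a : Fin m → ℂ} {b : Fin n → ℂ} (hdisj : ∀ k l, a k ≠ b l)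
    (hc : Complex.abs c < 1)
    (h1 : cf * ∏ l, (-((starRingEnd ℂ) (b l))) - c * cg * ∏ k, (-((starRingEnd ℂ) (a k))) = 0) :
    cg * ∏ k, (-((starRingEnd ℂ) (a k)))
      - (starRingEnd ℂ) c * cf * ∏ l, (-((starRingEnd ℂ) (b l))) ≠ 0 := by
  have hcg0 : cg ≠ 0 := fun h => by rw [h] at hcg; simp at hcg
  have hcf0 : cf ≠ 0 := fun h => by rw [h] at hcf; simp at hcf
  intro h2
  have hkey : cg * (∏ k, (-((starRingEnd ℂ) (a k)))) * (1 - (starRingEnd ℂ) c * c) = 0 := by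
    linear_combination h2 + (starRingEnd ℂ) c * h1
  have hc1 : (1 : ℂ) - (starRingEnd ℂ) c * c ≠ 0 := by
    intro h3
    have h4 : (starRingEnd ℂ) c * c = 1 := by linear_combination -h3
    have := congrArg Complex.abs h4
    rw [map_mul, Complex.abs_conj, map_one] at this
    nlinarith [Complex.abs.nonneg c]
  have hα : (∏ k, (-((starRingEnd ℂ) (a k)))) = 0 := by
    rcases mul_eq_zero.1 hkey with h | h
    · rcases mul_eq_zero.1 h with h' | h'
      · exact absurd h' hcg0
      · exact h'
    · exact absurd h hc1
  have hβ : (∏ l, (-((starRingEnd ℂ) (b l)))) = 0 := by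
    have h5 : cf * ∏ l, (-((starRingEnd ℂ) (b l))) = 0 := by
      rw [hα] at h1
      linear_combination h1
    rcases mul_eq_zero.1 h5 with h | h
    · exact absurd h hcf0
    · exact h
  obtain ⟨k, -, hk⟩ := Finset.prod_eq_zero_iff.1 hα
  obtain ⟨l, -, hl⟩ := Finset.prod_eq_zero_iff.1 hβ
  have hak : a k = 0 := by
    have := neg_eq_zero.1 hk
    simpa using congrArg (starRingEnd ℂ) this
  have hbl : b l = 0 := by
    have := neg_eq_zero.1 hl
    simpa using congrArg (starRingEnd ℂ) this
  exact hdisj k l (by rw [hak, hbl])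

end LP2

lemma main_count {m n : ℕ} (cf cg : ℂ) (hcf : Complex.abs cf = 1) (hcg : Complex.abs cg = 1)
    (a : Fin m → ℂ) (b : Fin n → ℂ)
    (ha : ∀ k, Complex.abs (a k) < 1) (hb : ∀ l, Complex.abs (b l) < 1)
    (hdisj : ∀ k l, a k ≠ b l) :
    ∀ c : ℂ, Complex.abs c < 1 → inCount (levelPoly cf cg c a b) = m := by
  classical
  have hdisj' : ∀ (l : Fin n) (k : Fin m), b l ≠ a k := fun l k h => hdisj k l h.symm
  set N : ℂ → ℕ := fun c => inCount (levelPoly cf cg c a b) with hN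
  set N' : ℂ → ℕ := fun c' => inCount (levelPoly cg cf c' b a) with hN'
  -- reflection identity
  have hid : ∀ c : ℂ, Complex.abs c < 1 → N c + N' ((starRingEnd ℂ) c) = m + n := by
    intro c hc
    have hne := levelPoly_ne_zero hcf hcg ha hb hdisj (ne_of_lt hc)
    have h1 := inCount_add_conjReflect (N := m+n) hne
      (natDegree_levelPoly_le cf cg c a b) (levelPoly_circle hcf hcg ha hb (ne_of_lt hc))
    rw [conjReflect_levelPoly cf cg c a b hcf hcg] at h1
    have hcfg : (starRingEnd ℂ) (cf * cg) ≠ 0 := by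
      simp only [ne_eq, _root_.map_eq_zero, mul_eq_zero]
      rintro (h' | h')
      · rw [h'] at hcf; simp at hcf
      · rw [h'] at hcg; simp at hcg
    have h2 : inCount (C ((starRingEnd ℂ) (cf * cg)) * levelPoly cg cf ((starRingEnd ℂ) c) b a)
        = N' ((starRingEnd ℂ) c) := by
      rw [inCount, roots_C_mul _ hcfg]
      rfl
    rw [h2] at h1
    exact h1
  -- local constancy
  have hloc : ∀ c₀ : ℂ, Complex.abs c₀ < 1 →
      ∀ᶠ c in 𝓝 c₀, (Complex.abs c < 1 → N c = N c₀) := by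
    intro c₀ hc₀
    by_cases hL : (levelPoly cf cg c₀ a b).coeff (m+n) ≠ 0
    · have hev := rootcount_nhds (d := m+n) (fun t => levelPoly cf cg t a b) c₀
        (fun t => natDegree_levelPoly_le cf cg t a b)
        (le_antisymm (natDegree_levelPoly_le cf cg c₀ a b) (le_natDegree_of_ne_zero hL))
        (levelPoly_ne_zero hcf hcg ha hb hdisj (ne_of_lt hc₀))
        (fun i => (levelPoly_coeff_continuous cf cg a b i).continuousAt)
        (levelPoly_circle hcf hcg ha hb (ne_of_lt hc₀))
      exact hev.mono fun c h _ => h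
    · push_neg at hL
      rw [coeff_levelPoly_top] at hL
      have htop := levelPoly_top_nonvanish hcf hcg hdisj hc₀ hL
      have htop' : (levelPoly cg cf ((starRingEnd ℂ) c₀) b a).coeff (m+n) ≠ 0 := by
        rw [Nat.add_comm m n, coeff_levelPoly_top]
        exact htop
      have habs' : Complex.abs ((starRingEnd ℂ) c₀) < 1 := by
        rw [Complex.abs_conj]; exact hc₀
      have hev' := rootcount_nhds (d := m+n) (fun t => levelPoly cg cf t b a)
        ((starRingEnd ℂ) c₀)
        (fun t => by
          show (levelPoly cg cf t b a).natDegree ≤ m + n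
          have := natDegree_levelPoly_le cg cf t b a
          omega)
        (le_antisymm (by
          show (levelPoly cg cf ((starRingEnd ℂ) c₀) b a).natDegree ≤ m + n
          have := natDegree_levelPoly_le cg cf ((starRingEnd ℂ) c₀) b a
          omega) (le_natDegree_of_ne_zero htop'))
        (levelPoly_ne_zero hcg hcf hb ha hdisj' (ne_of_lt habs'))
        (fun i => (levelPoly_coeff_continuous cg cf b a i).continuousAt)
        (levelPoly_circle hcg hcf hb ha (ne_of_lt habs'))
      have hconj : Filter.Tendsto (fun c : ℂ => (starRingEnd ℂ) c) (𝓝 c₀)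
          (𝓝 ((starRingEnd ℂ) c₀)) := (Complex.continuous_conj).continuousAt
      have hev'' := hconj.eventually hev'
      have hball : ∀ᶠ c in 𝓝 c₀, Complex.abs c < 1 :=
        (Complex.continuous_abs.continuousAt.tendsto).eventually (eventually_lt_nhds hc₀)
      filter_upwards [hev'', hball] with c h1 h2
      intro _
      have e1 := hid c h2
      have e2 := hid c₀ hc₀
      have h1' : N' ((starRingEnd ℂ) c) = N' ((starRingEnd ℂ) c₀) := h1
      rw [h1'] at e1
      omega
  -- connectedness
  have hanchor : N 0 = m := inCount_levelPoly_zero hcf ha hb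
  intro c hc
  set u : Set ℂ := {c | Complex.abs c < 1 ∧ N c = m} with hu
  set v : Set ℂ := {c | Complex.abs c < 1 ∧ N c ≠ m} with hv
  have hou : IsOpen u := by
    rw [isOpen_iff_mem_nhds]
    intro c₀ hc₀
    have hball : ∀ᶠ c in 𝓝 c₀, Complex.abs c < 1 :=
      (Complex.continuous_abs.continuousAt.tendsto).eventually (eventually_lt_nhds hc₀.1)
    have hEv : ∀ᶠ c in 𝓝 c₀, c ∈ u := by
      filter_upwards [hloc c₀ hc₀.1, hball] with c h1 h2
      exact ⟨h2, by rw [h1 h2]; exact hc₀.2⟩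
    exact Filter.eventually_iff.1 hEv
  have hov : IsOpen v := by
    rw [isOpen_iff_mem_nhds]
    intro c₀ hc₀
    have hball : ∀ᶠ c in 𝓝 c₀, Complex.abs c < 1 :=
      (Complex.continuous_abs.continuousAt.tendsto).eventually (eventually_lt_nhds hc₀.1)
    have hEv : ∀ᶠ c in 𝓝 c₀, c ∈ v := by
      filter_upwards [hloc c₀ hc₀.1, hball] with c h1 h2
      exact ⟨h2, by rw [h1 h2]; exact hc₀.2⟩
    exact Filter.eventually_iff.1 hEv
  have hmem : ∀ w : ℂ, w ∈ Metric.ball (0:ℂ) 1 ↔ Complex.abs w < 1 := by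
    intro w
    rw [Metric.mem_ball, Complex.dist_eq, sub_zero, Complex.norm_eq_abs]
  have hsub : Metric.ball (0:ℂ) 1 ⊆ u ∪ v := by
    intro w hw
    by_cases h : N w = m
    · exact Or.inl ⟨(hmem w).1 hw, h⟩
    · exact Or.inr ⟨(hmem w).1 hw, h⟩
  have hdis : Disjoint u v := by
    rw [Set.disjoint_left]
    intro w hwu hwv
    exact hwv.2 hwu.2
  have hnon : (Metric.ball (0:ℂ) 1 ∩ u).Nonempty := by
    refine ⟨0, ?_, ?_⟩
    · rw [hmem]; simp
    · exact ⟨by simp, hanchor⟩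
  have hpre : IsPreconnected (Metric.ball (0:ℂ) 1) := (convex_ball (0:ℂ) 1).isPreconnected
  have hkey := hpre.subset_left_of_subset_union hou hov hdis hsub hnon
  exact (hkey ((hmem c).2 hc)).2

/-- for Blaschke products f, g of degrees m, n with disjoint zero sets,
and φ = f/g, the equation φ(z) = c has exactly m solutions in 𝔻 (with multiplicity)
when |c| < 1, and exactly n solutions when |c| > 1. -/
theorem stmt8 {m n : ℕ} (cf cg : ℂ) (hcf : ‖cf‖ = 1) (hcg : ‖cg‖ = 1)
    (a : Fin m → ℂ) (b : Fin n → ℂ)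
    (ha : ∀ k, ‖a k‖ < 1) (hb : ∀ l, ‖b l‖ < 1)
    (hdisj : ∀ k l, a k ≠ b l) (c : ℂ) :
    (‖c‖ < 1 →
      Multiset.card ((levelPoly cf cg c a b).roots.filter fun z => ‖z‖ < 1) = m) ∧
    (1 < ‖c‖ →
      Multiset.card ((levelPoly cf cg c a b).roots.filter fun z => ‖z‖ < 1) = n) := by
  simp only [Complex.norm_eq_abs] at *
  constructor
  · intro hc
    exact main_count cf cg hcf hcg a b ha hb hdisj c hc
  · intro hc
    have hc0 : c ≠ 0 := by
      intro h
      rw [h, map_zero] at hc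
      linarith
    have hdisj' : ∀ (l : Fin n) (k : Fin m), b l ≠ a k := fun l k h => hdisj k l h.symm
    have hscale : levelPoly cf cg c a b = C (-c) * levelPoly cg cf c⁻¹ b a := by
      rw [levelPoly, levelPoly]
      simp only [C_mul, C_neg]
      have h1 : C c * C (c⁻¹) = (1 : Polynomial ℂ) := by
        rw [← C_mul, mul_inv_cancel₀ hc0, C_1]
      linear_combination (-(C cf * ((∏ k, (X - C (a k))) *
        ∏ l, (1 - C ((starRingEnd ℂ) (b l)) * X)))) * h1
    have hcinv : Complex.abs c⁻¹ < 1 := by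
      rw [map_inv₀]
      exact (inv_lt_one₀ (by linarith)).2 hc
    have h2 := main_count cg cf hcg hcf b a hb ha hdisj' c⁻¹ hcinv
    rw [hscale]
    show inCount (C (-c) * levelPoly cg cf c⁻¹ b a) = n
    rw [inCount, roots_C_mul _ (neg_ne_zero.2 hc0)]
    exact h2
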